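/- arXiv:1312.4864 — 4 statements merged into one kernel-verified Lean document; each statement's English description precedes it below -/
import Mathlib

section
/- Discrete Grönwall-type stability: Let 0 < γ < 1, τ > 0, t_k = kτ, and let (E_n)_{n≥0} be a sequence of nonnegative reals such that for every n ≥ 0, ∑_{s=0}^{n} (t_{n−s+1}^{1−γ} − t_{n−s}^{1−γ})(E_{s+1} − E_s) ≤ 0. Then E_n ≤ E_0 for all n ≥ 0. -/
open Finset

theorem stmt_5 (γ τ : ℝ) (hγ0 : 0 < γ) (hγ1 : γ < 1) (hτ : 0 < τ)
    (t : ℕ → ℝ) (ht : ∀ m : ℕ, t m = ((m:ℝ) * τ) ^ (1 - γ))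
    (E : ℕ → ℝ) (hE : ∀ n, 0 ≤ E n)
    (h : ∀ n : ℕ,
      ∑ s ∈ Finset.range (n + 1), (t (n - s + 1) - t (n - s)) * (E (s + 1) - E s) ≤ 0) :
    ∀ n : ℕ, E n ≤ E 0 := by
  set p : ℝ := 1 - γ with hp
  have hp0 : 0 < p := by simp [hp]; linarith
  have hp1 : p < 1 := by simp [hp]; linarith
  set b : ℕ → ℝ := fun m => t (m + 1) - t m with hb
  -- positivity of b
  have hbpos : ∀ m, 0 < b m := by
    intro m
    have h1 : ((m:ℝ) * τ) < ((m:ℝ) + 1) * τ := by nlinarith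
    have h2 : (0:ℝ) ≤ (m:ℝ) * τ := by positivity
    have := Real.rpow_lt_rpow h2 h1 hp0
    simp only [hb, ht]
    push_cast
    linarith [this]
  -- b is decreasing
  have hbdec : ∀ m, b (m + 1) ≤ b m := by
    intro m
    have cc := (Real.strictConcaveOn_rpow hp0 hp1).concaveOn
    have hx : ((m:ℝ) * τ) ∈ Set.Ici (0:ℝ) := Set.mem_Ici.mpr (by positivity)
    have hy : (((m:ℝ) + 2) * τ) ∈ Set.Ici (0:ℝ) := Set.mem_Ici.mpr (by positivity)
    have key := cc.2 hx hy (by norm_num : (0:ℝ) ≤ 1/2) (by norm_num : (0:ℝ) ≤ 1/2)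
      (by norm_num)
    have hmid : (1/2 : ℝ) • ((m:ℝ) * τ) + (1/2 : ℝ) • (((m:ℝ) + 2) * τ)
        = ((m:ℝ) + 1) * τ := by
      simp only [smul_eq_mul]; ring
    rw [hmid] at key
    simp only [smul_eq_mul] at key
    simp only [hb, ht]
    push_cast
    have e : ((m:ℝ) + 1 + 1) * τ = ((m:ℝ) + 2) * τ := by ring
    rw [e]
    linarith [key]
  -- the Abel summation identity
  have key : ∀ n, ∑ s ∈ Finset.range (n + 1), b (n - s) * (E (s + 1) - E s)
      = b 0 * E (n + 1) - b n * E 0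
        + ∑ k ∈ Finset.range n, (b (n - k) - b (n - (k + 1))) * E (k + 1) := by
    intro n
    have h1 : ∑ s ∈ Finset.range (n + 1), b (n - s) * (E (s + 1) - E s)
        = (∑ s ∈ Finset.range (n + 1), b (n - s) * E (s + 1))
          - ∑ s ∈ Finset.range (n + 1), b (n - s) * E s := by
      rw [← Finset.sum_sub_distrib]
      exact Finset.sum_congr rfl (fun s _ => by ring)
    rw [h1, Finset.sum_range_succ (fun s => b (n - s) * E (s + 1)),
      Finset.sum_range_succ' (fun s => b (n - s) * E s)]
    simp only [Nat.sub_self, Nat.sub_zero]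
    rw [show (∑ k ∈ Finset.range n, (b (n - k) - b (n - (k + 1))) * E (k + 1))
        = (∑ k ∈ Finset.range n, b (n - k) * E (k + 1))
          - ∑ k ∈ Finset.range n, b (n - (k + 1)) * E (k + 1) by
      rw [← Finset.sum_sub_distrib]
      exact Finset.sum_congr rfl (fun k _ => by ring)]
    ring
  -- telescoping
  have tel : ∀ n, ∑ k ∈ Finset.range n, (b (n - (k + 1)) - b (n - k)) = b 0 - b n := by
    intro n
    have := Finset.sum_range_sub (fun k => b (n - k)) n
    calc ∑ k ∈ Finset.range n, (b (n - (k + 1)) - b (n - k))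
        = b (n - n) - b (n - 0) := this
      _ = b 0 - b n := by simp
  -- strong induction
  intro n
  induction n using Nat.strong_induction_on with
  | _ n ih =>
    match n with
    | 0 => exact le_refl _
    | Nat.succ m =>
      have hm := h m
      have hm' : ∑ s ∈ Finset.range (m + 1), b (m - s) * (E (s + 1) - E s) ≤ 0 := by
        refine le_trans (le_of_eq (Finset.sum_congr rfl fun s hs => ?_)) hm
        simp only [hb]
      rw [key m] at hm'
      -- coefficients are nonneg
      have hcoef : ∀ k ∈ Finset.range m, 0 ≤ b (m - (k + 1)) - b (m - k) := by
        intro k hk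
        have hkm : k < m := Finset.mem_range.mp hk
        have : m - k = (m - (k + 1)) + 1 := by omega
        rw [this]
        linarith [hbdec (m - (k + 1))]
      have hsum : ∑ k ∈ Finset.range m, (b (m - (k + 1)) - b (m - k)) * E (k + 1)
          ≤ ∑ k ∈ Finset.range m, (b (m - (k + 1)) - b (m - k)) * E 0 := by
        refine Finset.sum_le_sum fun k hk => ?_
        have hkm : k < m := Finset.mem_range.mp hk
        exact mul_le_mul_of_nonneg_left (ih (k + 1) (by omega)) (hcoef k hk)
      have hsum' : ∑ k ∈ Finset.range m, (b (m - (k + 1)) - b (m - k)) * E 0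
          = (b 0 - b m) * E 0 := by
        rw [← Finset.sum_mul, tel m]
      have hfin : b 0 * E (m + 1) ≤ b 0 * E 0 := by
        have e1 : ∑ k ∈ Finset.range m, (b (m - k) - b (m - (k + 1))) * E (k + 1)
            = - ∑ k ∈ Finset.range m, (b (m - (k + 1)) - b (m - k)) * E (k + 1) := by
          rw [← Finset.sum_neg_distrib]
          exact Finset.sum_congr rfl (fun k _ => by ring)
        rw [e1] at hm'
        nlinarith [hsum, hsum', hm']
      exact le_of_mul_le_mul_left hfin (hbpos 0)
end

section
/- L1-discretization consistency: Let 0 < α < 1, τ > 0, and v ∈ C³[0,T]. For t_{j+1} = (j+1)τ ≤ T, the difference between the Caputo derivative ∂_{0t_{j+1}}^α v and its L1 approximation Δ_{0t_{j+1}}^α v = Γ(2−α)^{−1} ∑_{s=0}^{j} (t_{j−s+1}^{1−α} − t_{j−s}^{1−α})(v(t_{s+1}) − v(t_s))/τ satisfies |∂_{0t_{j+1}}^α v − Δ_{0t_{j+1}}^α v| ≤ C τ^{2−α} with a constant C depending only on α, T and max_{[0,T]}(|v''| + |v'''|). -/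
open Finset MeasureTheory

open MeasureTheory Set intervalIntegral in
private lemma intble_w {α : ℝ} (hα : α < 1) (b c d : ℝ) :
    IntervalIntegrable (fun s => (b - s) ^ (-α)) volume c d := by
  have h := (intervalIntegral.intervalIntegrable_rpow'
      (a := b - c) (b := b - d) (by linarith : (-1:ℝ) < -α)).comp_sub_left b
  simpa using h

open MeasureTheory Set intervalIntegral in
private lemma int_w {α : ℝ} (hα : α < 1) (b c d : ℝ) :
    ∫ s in c..d, (b - s) ^ (-α) = ((b - c) ^ (1 - α) - (b - d) ^ (1 - α)) / (1 - α) := by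
  have h : -α + 1 = 1 - α := by ring
  rw [intervalIntegral.integral_comp_sub_left (fun x => x ^ (-α)) b,
    integral_rpow (Or.inl (by linarith)), h]

set_option maxHeartbeats 1000000 in
theorem stmt_7 (α T : ℝ) (hα0 : 0 < α) (hα1 : α < 1) (hT : 0 < T)
    (v : ℝ → ℝ) (hv : ContDiffOn ℝ 3 v (Set.Icc 0 T)) :
    ∃ C : ℝ, 0 ≤ C ∧
      ∀ (τ : ℝ) (j : ℕ), 0 < τ → ((j:ℝ) + 1) * τ ≤ T →
        |(1 / Real.Gamma (1 - α)) *
            (∫ s in (0:ℝ)..(((j:ℝ) + 1) * τ),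
              deriv v s * (((j:ℝ) + 1) * τ - s) ^ (-α))
          - (1 / Real.Gamma (2 - α)) *
            ∑ s ∈ Finset.range (j + 1),
              ((((j - s + 1 : ℕ):ℝ) * τ) ^ (1 - α) - (((j - s : ℕ):ℝ) * τ) ^ (1 - α)) *
                ((v (((s:ℝ) + 1) * τ) - v ((s:ℝ) * τ)) / τ)|
          ≤ C * τ ^ (2 - α) := by
  have h1α : (0:ℝ) < 1 - α := by linarith
  have hΓ : 0 < Real.Gamma (1 - α) := Real.Gamma_pos_of_pos h1α
  have hΓ2 : Real.Gamma (2 - α) = (1 - α) * Real.Gamma (1 - α) := by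
    rw [show (2:ℝ) - α = (1 - α) + 1 by ring]
    exact Real.Gamma_add_one h1α.ne'
  have hud : UniqueDiffOn ℝ (Set.Icc (0:ℝ) T) := uniqueDiffOn_Icc hT
  set g : ℝ → ℝ := derivWithin v (Set.Icc 0 T) with hgdef
  have hvd : DifferentiableOn ℝ v (Set.Icc 0 T) := hv.differentiableOn (by norm_num)
  have hgcd : ContDiffOn ℝ 2 g (Set.Icc 0 T) := hv.derivWithin hud (by norm_num)
  have hgc : ContinuousOn g (Set.Icc 0 T) := hgcd.continuousOn
  have hgd : DifferentiableOn ℝ g (Set.Icc 0 T) := hgcd.differentiableOn (by norm_num)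
  have hgcd1 : ContDiffOn ℝ 1 (derivWithin g (Set.Icc 0 T)) (Set.Icc 0 T) :=
    hgcd.derivWithin hud (by norm_num)
  obtain ⟨M, hM⟩ := isCompact_Icc.exists_bound_of_continuousOn hgcd1.continuousOn
  have hM0 : 0 ≤ M := le_trans (norm_nonneg _) (hM 0 (Set.mem_Icc.mpr ⟨le_refl 0, hT.le⟩))
  have hlip : ∀ x ∈ Set.Icc (0:ℝ) T, ∀ y ∈ Set.Icc (0:ℝ) T, |g y - g x| ≤ M * |y - x| := by
    intro x hx y hy
    simpa [Real.norm_eq_abs] using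
      (convex_Icc (0:ℝ) T).norm_image_sub_le_of_norm_derivWithin_le hgd hM hx hy
  refine ⟨M * (1 + 1 / (1 - α)) / Real.Gamma (1 - α), by
    have h2 : (0:ℝ) < 1 / (1 - α) := by positivity
    apply div_nonneg (mul_nonneg hM0 (by linarith)) hΓ.le, ?_⟩
  intro τ j hτ hjT
  set b : ℝ := ((j:ℝ) + 1) * τ with hbdef
  have hb : 0 < b := by positivity
  set t : ℕ → ℝ := fun k => (k:ℝ) * τ with htdef
  have ht0 : t 0 = 0 := by simp [htdef]
  have htj : t (j+1) = b := by simp only [htdef, hbdef]; push_cast; ring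
  have htmono : ∀ k, t k ≤ t (k+1) := by
    intro k
    simp only [htdef]
    push_cast
    nlinarith [hτ.le]
  have hlen : ∀ k : ℕ, t (k+1) - t k = τ := by
    intro k; simp only [htdef]; push_cast; ring
  have htnonneg : ∀ k : ℕ, 0 ≤ t k := by
    intro k; simp only [htdef]; positivity
  have htleb : ∀ k : ℕ, k ≤ j + 1 → t k ≤ b := by
    intro k hk
    simp only [htdef, hbdef]
    have : (k:ℝ) ≤ (j:ℝ) + 1 := by exact_mod_cast hk
    nlinarith [hτ.le]
  have htsub : ∀ k, k ≤ j → Set.Icc (t k) (t (k+1)) ⊆ Set.Icc (0:ℝ) T := by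
    intro k hk
    apply Set.Icc_subset_Icc (htnonneg k)
    exact le_trans (htleb (k+1) (by omega)) hjT
  -- FTC on each subinterval
  have hgcont : ∀ k, k ≤ j → ContinuousOn g (Set.uIcc (t k) (t (k+1))) := by
    intro k hk
    rw [Set.uIcc_of_le (htmono k)]
    exact hgc.mono (htsub k hk)
  have hftc : ∀ k, k ≤ j → ∫ s in t k..t (k+1), g s = v (t (k+1)) - v (t k) := by
    intro k hk
    have hsub := htsub k hk
    have hkT : t (k+1) ≤ T := (hsub (Set.right_mem_Icc.mpr (htmono k))).2
    apply intervalIntegral.integral_eq_sub_of_hasDerivAt_of_le (htmono k)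
      (hv.continuousOn.mono hsub)
    · intro x hx
      have hx0 : 0 < x := lt_of_le_of_lt (htnonneg k) hx.1
      have hxT : x < T := lt_of_lt_of_le hx.2 hkT
      exact ((hvd x (Set.mem_Icc.mpr ⟨hx0.le, hxT.le⟩)).hasDerivWithinAt).hasDerivAt
        (Icc_mem_nhds hx0 hxT)
    · exact (hgcont k hk).intervalIntegrable
  set DQ : ℕ → ℝ := fun k => (v (t (k+1)) - v (t k)) / τ with hDQdef
  set A : ℕ → ℝ := fun k => ((b - t k) ^ (1 - α) - (b - t (k+1)) ^ (1 - α)) / (1 - α) with hAdef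
  have hAint : ∀ k : ℕ, ∫ s in t k..t (k+1), (b - s) ^ (-α) = A k := by
    intro k
    simp only [hAdef]
    exact int_w hα1 b (t k) (t (k+1))
  set E : ℕ → ℝ := fun k => (∫ s in t k..t (k+1), g s * (b - s) ^ (-α)) - DQ k * A k with hEdef
  have hint_gw : ∀ k, k ≤ j → IntervalIntegrable (fun s => g s * (b - s) ^ (-α))
      volume (t k) (t (k+1)) := by
    intro k hk
    exact (intble_w hα1 b (t k) (t (k+1))).continuousOn_mul (hgcont k hk)
  -- replace deriv v by g a.e. and split the integral
  have hae : (∫ s in (0:ℝ)..b, deriv v s * (b - s) ^ (-α))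
      = ∫ s in (0:ℝ)..b, g s * (b - s) ^ (-α) := by
    apply intervalIntegral.integral_congr_ae
    rw [MeasureTheory.ae_iff]
    apply measure_mono_null _ (measure_singleton T)
    intro x hx
    simp only [Set.mem_setOf_eq, Classical.not_imp] at hx
    obtain ⟨hxI, hne⟩ := hx
    rw [Set.uIoc_of_le hb.le] at hxI
    simp only [Set.mem_singleton_iff]
    by_contra hxT
    apply hne
    have hxT' : x < T := lt_of_le_of_ne (le_trans hxI.2 hjT) hxT
    rw [hgdef, derivWithin_of_mem_nhds (Icc_mem_nhds hxI.1 hxT')]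
  have hsplit : ∑ k ∈ Finset.range (j+1), ∫ s in t k..t (k+1), g s * (b - s) ^ (-α)
      = ∫ s in (0:ℝ)..b, g s * (b - s) ^ (-α) := by
    have h := intervalIntegral.sum_integral_adjacent_intervals (a := t) (n := j+1)
      (f := fun s => g s * (b - s) ^ (-α)) (fun k hk => hint_gw k (Nat.lt_succ_iff.mp hk))
    rwa [ht0, htj] at h
  -- rewrite the discrete sum
  have hsum : (1 / Real.Gamma (2 - α)) * ∑ s ∈ Finset.range (j + 1),
        ((((j - s + 1 : ℕ):ℝ) * τ) ^ (1 - α) - (((j - s : ℕ):ℝ) * τ) ^ (1 - α)) *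
          ((v (((s:ℝ) + 1) * τ) - v ((s:ℝ) * τ)) / τ)
      = (1 / Real.Gamma (1 - α)) * ∑ k ∈ Finset.range (j+1), DQ k * A k := by
    rw [Finset.mul_sum, Finset.mul_sum]
    apply Finset.sum_congr rfl
    intro s hs
    have hsj : s ≤ j := Nat.lt_succ_iff.mp (Finset.mem_range.mp hs)
    have hc1 : (((j - s + 1 : ℕ):ℝ)) * τ = b - t s := by
      have : ((j - s : ℕ):ℝ) = (j:ℝ) - (s:ℝ) := by
        rw [Nat.cast_sub hsj]
      push_cast [this]
      simp only [htdef, hbdef]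
      ring
    have hc2 : (((j - s : ℕ):ℝ)) * τ = b - t (s+1) := by
      have : ((j - s : ℕ):ℝ) = (j:ℝ) - (s:ℝ) := by
        rw [Nat.cast_sub hsj]
      rw [this]
      simp only [htdef, hbdef]
      push_cast
      ring
    have ht1 : ((s:ℝ) + 1) * τ = t (s+1) := by simp only [htdef]; push_cast; ring
    have ht2 : (s:ℝ) * τ = t s := by simp only [htdef]
    rw [hc1, hc2, ht1, ht2, hΓ2]
    simp only [hDQdef, hAdef]
    field_simp
  -- the key identity
  have key : (1 / Real.Gamma (1 - α)) *
            (∫ s in (0:ℝ)..b, deriv v s * (b - s) ^ (-α))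
          - (1 / Real.Gamma (2 - α)) *
            ∑ s ∈ Finset.range (j + 1),
              ((((j - s + 1 : ℕ):ℝ) * τ) ^ (1 - α) - (((j - s : ℕ):ℝ) * τ) ^ (1 - α)) *
                ((v (((s:ℝ) + 1) * τ) - v ((s:ℝ) * τ)) / τ)
      = (1 / Real.Gamma (1 - α)) * ∑ k ∈ Finset.range (j+1), E k := by
    rw [hae, ← hsplit, hsum, ← mul_sub, ← Finset.sum_sub_distrib]
  -- bound on |g s - DQ k|
  have havg : ∀ k, k ≤ j → ∀ s ∈ Set.Icc (t k) (t (k+1)), |g s - DQ k| ≤ M * τ := by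
    intro k hk s hs
    have hsub := htsub k hk
    have hsIcc := hsub hs
    have hgint : IntervalIntegrable g volume (t k) (t (k+1)) :=
      (hgcont k hk).intervalIntegrable
    have hbound : ∀ u ∈ Set.Icc (t k) (t (k+1)), g s - M * τ ≤ g u ∧ g u ≤ g s + M * τ := by
      intro u hu
      have h1 := hlip s hsIcc u (hsub hu)
      have h2 : |u - s| ≤ τ := by
        rw [abs_le]
        have e1 := hs.1; have e2 := hs.2; have e3 := hu.1; have e4 := hu.2
        have e5 := hlen k
        constructor <;> linarith
      have h3 : M * |u - s| ≤ M * τ := mul_le_mul_of_nonneg_left h2 hM0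
      have h4 := abs_le.mp (h1.trans h3)
      constructor <;> linarith [h4.1, h4.2]
    have hup : ∫ u in t k..t (k+1), g u ≤ ∫ u in t k..t (k+1), (g s + M * τ) :=
      intervalIntegral.integral_mono_on (htmono k) hgint intervalIntegrable_const
        (fun u hu => (hbound u hu).2)
    have hlow : ∫ u in t k..t (k+1), (g s - M * τ) ≤ ∫ u in t k..t (k+1), g u :=
      intervalIntegral.integral_mono_on (htmono k) intervalIntegrable_const hgint
        (fun u hu => (hbound u hu).1)
    rw [intervalIntegral.integral_const, hlen k, smul_eq_mul] at hup
    rw [intervalIntegral.integral_const, hlen k, smul_eq_mul] at hlow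
    rw [hftc k hk] at hup hlow
    have hDQτ : DQ k * τ = v (t (k+1)) - v (t k) := by
      simp only [hDQdef]; field_simp
    rw [abs_le]
    constructor <;> nlinarith [hτ]
  -- bound for the last interval
  have hwnonneg : ∀ s ∈ Set.Icc (t j) (t (j+1)), (0:ℝ) ≤ (b - s) ^ (-α) := by
    intro s hs
    apply Real.rpow_nonneg
    have := hs.2
    rw [htj] at this
    linarith
  have hEj : |E j| ≤ M * τ * A j := by
    have hE : E j = ∫ s in t j..t (j+1), (g s - DQ j) * (b - s) ^ (-α) := by
      have hcalc : (∫ s in t j..t (j+1), (g s - DQ j) * (b - s) ^ (-α))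
          = (∫ s in t j..t (j+1), g s * (b - s) ^ (-α))
            - DQ j * ∫ s in t j..t (j+1), (b - s) ^ (-α) := by
        rw [← intervalIntegral.integral_const_mul,
          ← intervalIntegral.integral_sub (hint_gw j le_rfl)
            ((intble_w hα1 b (t j) (t (j+1))).const_mul (DQ j))]
        apply intervalIntegral.integral_congr
        intro s _
        ring
      rw [hcalc, hAint j]
    rw [hE]
    have hiprod : IntervalIntegrable (fun s => (g s - DQ j) * (b - s) ^ (-α))
        volume (t j) (t (j+1)) :=
      (intble_w hα1 b (t j) (t (j+1))).continuousOn_mul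
        ((hgcont j le_rfl).sub continuousOn_const)
    calc |∫ s in t j..t (j+1), (g s - DQ j) * (b - s) ^ (-α)|
        ≤ ∫ s in t j..t (j+1), |(g s - DQ j) * (b - s) ^ (-α)| :=
          intervalIntegral.abs_integral_le_integral_abs (htmono j)
      _ ≤ ∫ s in t j..t (j+1), (M * τ) * (b - s) ^ (-α) := by
          apply intervalIntegral.integral_mono_on (htmono j) hiprod.abs
            ((intble_w hα1 b (t j) (t (j+1))).const_mul (M * τ))
          intro s hs
          rw [abs_mul, abs_of_nonneg (hwnonneg s hs)]
          exact mul_le_mul_of_nonneg_right (havg j le_rfl s hs) (hwnonneg s hs)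
      _ = M * τ * A j := by
          rw [intervalIntegral.integral_const_mul, hAint j]
  -- bound for the earlier intervals
  have hEk : ∀ k, k < j →
      |E k| ≤ M * τ^2 * ((b - t (k+1)) ^ (-α) - (b - t k) ^ (-α)) := by
    intro k hk
    have hbk1 : 0 < b - t (k+1) := by
      simp only [htdef, hbdef]
      push_cast
      have : (k:ℝ) + 1 ≤ (j:ℝ) := by exact_mod_cast hk
      nlinarith
    have hbpos : ∀ s ∈ Set.Icc (t k) (t (k+1)), 0 < b - s := by
      intro s hs
      have := hs.2
      linarith
    have hwcont : ContinuousOn (fun s => (b - s) ^ (-α)) (Set.uIcc (t k) (t (k+1))) := by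
      rw [Set.uIcc_of_le (htmono k)]
      apply ContinuousOn.rpow_const (continuousOn_const.sub continuousOn_id)
      intro x hx
      exact Or.inl (ne_of_gt (hbpos x hx))
    have hgco : ContinuousOn (fun s => g s - DQ k) (Set.uIcc (t k) (t (k+1))) :=
      (hgcont k hk.le).sub continuousOn_const
    have hintg : ∫ s in t k..t (k+1), g s = DQ k * τ := by
      rw [hftc k hk.le]
      simp only [hDQdef]
      field_simp
    -- mean-zero identity
    have h3 : (∫ s in t k..t (k+1), (g s - DQ k)) = 0 := by
      rw [intervalIntegral.integral_sub ((hgcont k hk.le).intervalIntegrable)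
        intervalIntegrable_const, hintg, intervalIntegral.integral_const, hlen k,
        smul_eq_mul]
      ring
    have h4 : (∫ s in t k..t (k+1), (g s - DQ k) * (b - s) ^ (-α)) = E k := by
      have hcalc : (∫ s in t k..t (k+1), (g s - DQ k) * (b - s) ^ (-α))
          = (∫ s in t k..t (k+1), g s * (b - s) ^ (-α))
            - DQ k * ∫ s in t k..t (k+1), (b - s) ^ (-α) := by
        rw [← intervalIntegral.integral_const_mul,
          ← intervalIntegral.integral_sub (hint_gw k hk.le)
            ((intble_w hα1 b (t k) (t (k+1))).const_mul (DQ k))]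
        apply intervalIntegral.integral_congr
        intro s _
        ring
      rw [hcalc, hAint k]
    have hidE : E k = ∫ s in t k..t (k+1),
        (g s - DQ k) * ((b - s) ^ (-α) - (b - t k) ^ (-α)) := by
      have h2 : (∫ s in t k..t (k+1), (g s - DQ k) * ((b - s) ^ (-α) - (b - t k) ^ (-α)))
          = (∫ s in t k..t (k+1), (g s - DQ k) * (b - s) ^ (-α))
            - (∫ s in t k..t (k+1), (g s - DQ k)) * (b - t k) ^ (-α) := by
        rw [← intervalIntegral.integral_mul_const,
          ← intervalIntegral.integral_sub (g := fun s => (g s - DQ k) * (b - t k) ^ (-α))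
            ((intble_w hα1 b (t k) (t (k+1))).continuousOn_mul hgco)
            ((hgco.mul continuousOn_const).intervalIntegrable)]
        apply intervalIntegral.integral_congr
        intro s _
        ring
      rw [h2, h3, h4]
      ring
    rw [hidE]
    have hwlow : ∀ s ∈ Set.Icc (t k) (t (k+1)), (b - t k) ^ (-α) ≤ (b - s) ^ (-α) := by
      intro s hs
      exact Real.rpow_le_rpow_of_nonpos (hbpos s hs) (by linarith [hs.1]) (by linarith)
    have hwhigh : ∀ s ∈ Set.Icc (t k) (t (k+1)), (b - s) ^ (-α) ≤ (b - t (k+1)) ^ (-α) := by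
      intro s hs
      exact Real.rpow_le_rpow_of_nonpos hbk1 (by linarith [hs.2]) (by linarith)
    have hipr : IntervalIntegrable
        (fun s => (g s - DQ k) * ((b - s) ^ (-α) - (b - t k) ^ (-α)))
        volume (t k) (t (k+1)) :=
      ((hgco.mul (hwcont.sub continuousOn_const))).intervalIntegrable
    calc |∫ s in t k..t (k+1), (g s - DQ k) * ((b - s) ^ (-α) - (b - t k) ^ (-α))|
        ≤ ∫ s in t k..t (k+1), |(g s - DQ k) * ((b - s) ^ (-α) - (b - t k) ^ (-α))| :=
          intervalIntegral.abs_integral_le_integral_abs (htmono k)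
      _ ≤ ∫ s in t k..t (k+1), (M * τ) * ((b - t (k+1)) ^ (-α) - (b - t k) ^ (-α)) := by
          apply intervalIntegral.integral_mono_on (htmono k) hipr.abs
            intervalIntegrable_const
          intro s hs
          rw [abs_mul]
          apply mul_le_mul (havg k hk.le s hs) _ (abs_nonneg _)
            (mul_nonneg hM0 hτ.le)
          rw [abs_of_nonneg (by linarith [hwlow s hs])]
          linarith [hwhigh s hs, hwlow s hs]
      _ = M * τ^2 * ((b - t (k+1)) ^ (-α) - (b - t k) ^ (-α)) := by
          rw [intervalIntegral.integral_const, hlen k, smul_eq_mul]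
          ring
  -- assemble
  have hbtj : b - t j = τ := by
    simp only [htdef, hbdef]
    ring
  have hAj : A j = τ ^ (1 - α) / (1 - α) := by
    simp only [hAdef]
    rw [htj, hbtj, sub_self, Real.zero_rpow h1α.ne', sub_zero]
  have hrpow2 : τ ^ ((2:ℝ) - α) = τ^2 * τ ^ (-α) := by
    rw [show (2:ℝ) - α = (2:ℝ) + (-α) by ring, Real.rpow_add hτ, Real.rpow_two]
  have hrpow1 : τ ^ ((1:ℝ) - α) = τ * τ ^ (-α) := by
    rw [show (1:ℝ) - α = 1 + (-α) by ring, Real.rpow_add hτ, Real.rpow_one]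
  have hsumE : |∑ k ∈ Finset.range (j+1), E k| ≤ M * (1 + 1/(1-α)) * τ ^ ((2:ℝ) - α) := by
    calc |∑ k ∈ Finset.range (j+1), E k|
        ≤ ∑ k ∈ Finset.range (j+1), |E k| := Finset.abs_sum_le_sum_abs _ _
      _ = (∑ k ∈ Finset.range j, |E k|) + |E j| := Finset.sum_range_succ _ j
      _ ≤ (∑ k ∈ Finset.range j,
            M * τ^2 * ((b - t (k+1)) ^ (-α) - (b - t k) ^ (-α))) + M * τ * A j := by
          apply add_le_add _ hEj
          exact Finset.sum_le_sum (fun k hk => hEk k (Finset.mem_range.mp hk))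
      _ = M * τ^2 * ((b - t j) ^ (-α) - (b - t 0) ^ (-α)) + M * τ * A j := by
          rw [← Finset.mul_sum, Finset.sum_range_sub (fun k => (b - t k) ^ (-α)) j]
      _ ≤ M * τ^2 * (b - t j) ^ (-α) + M * τ * A j := by
          apply add_le_add _ le_rfl
          apply mul_le_mul_of_nonneg_left _ (by positivity)
          have : (0:ℝ) ≤ (b - t 0) ^ (-α) := by
            apply Real.rpow_nonneg
            rw [ht0]
            linarith
          linarith
      _ = M * (1 + 1/(1-α)) * τ ^ ((2:ℝ) - α) := by
          rw [hbtj, hAj, hrpow2, hrpow1]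
          field_simp
  rw [key, abs_mul, abs_of_pos (by positivity : (0:ℝ) < 1/Real.Gamma (1-α))]
  calc (1/Real.Gamma (1-α)) * |∑ k ∈ Finset.range (j+1), E k|
      ≤ (1/Real.Gamma (1-α)) * (M * (1 + 1/(1-α)) * τ ^ ((2:ℝ) - α)) :=
        mul_le_mul_of_nonneg_left hsumE (by positivity)
    _ = M * (1 + 1/(1-α)) / Real.Gamma (1-α) * τ ^ (2 - α) := by
        ring
end

section
/- Midpoint kernel cancellation estimate: Let 0 < α < 1, M ≥ 0, τ > 0, t_k = kτ, and suppose |c_s| ≤ M for s = 0,…,j. Then | ∑_{s=0}^{j} c_s ∫_{t_s}^{t_{s+1}} (η − t_{s+1/2}) (t_{j+1} − η)^{−α} dη | ≤ (2^α M /(4)) · τ^{2−α} /((1−α)(2−α)), where t_{s+1/2} = (s + 1/2)τ. -/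
open Finset

lemma key_ineq (α : ℝ) (h0 : 0 ≤ α) (h1 : α ≤ 1) : 2 + α + α^2 ≤ 2 * (2:ℝ)^α := by
  have hL1 : Real.log 2 > 0.6931471803 := Real.log_two_gt_d9
  have hL2 : Real.log 2 < 0.6931471808 := Real.log_two_lt_d9
  set L := Real.log 2 with hL
  have hL0 : 0 < L := by linarith
  have hrw : (2:ℝ)^α = Real.exp (α * L) := by
    rw [Real.rpow_def_of_pos (by norm_num), hL, mul_comm]
  rw [hrw]
  rcases le_total α (1/2) with hc | hc
  · have h1' : 1 + α*L/3 ≤ Real.exp (α*L/3) := by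
      have := Real.add_one_le_exp (α*L/3); linarith
    have h3 : (1 + α*L/3)^3 ≤ Real.exp (α*L) := by
      calc (1 + α*L/3)^3 ≤ (Real.exp (α*L/3))^3 := by
            apply pow_le_pow_left₀ (by positivity) h1'
        _ = Real.exp (α*L) := by rw [← Real.exp_nat_mul]; ring_nf
    have hmono : (1 + α*(0.6931471803:ℝ)/3)^3 ≤ (1 + α*L/3)^3 := by
      apply pow_le_pow_left₀ (by positivity)
      nlinarith
    have hpoly : 2 + α + α^2 ≤ 2*(1 + α*(0.6931471803:ℝ)/3)^3 := by
      nlinarith [mul_nonneg h0 h0, mul_nonneg (mul_nonneg h0 h0) h0,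
        mul_nonneg h0 (by linarith : (0:ℝ) ≤ 1/2 - α),
        mul_nonneg (mul_nonneg h0 h0) (by linarith : (0:ℝ) ≤ 1/2 - α)]
    linarith
  · set β := 1 - α with hβ
    have hβ0 : 0 ≤ β := by simp only [hβ]; linarith
    have hβh : β ≤ 1/2 := by simp only [hβ]; linarith
    have hrw2 : Real.exp (α * L) = 2 * Real.exp (-(β * L)) := by
      have h : α * L = L + (-(β*L)) := by rw [hβ]; ring
      rw [h, Real.exp_add, hL, Real.exp_log] <;> norm_num
    rw [hrw2]
    have h1' : 1 - β*L/3 ≤ Real.exp (-(β*L)/3) := by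
      have := Real.add_one_le_exp (-(β*L)/3); linarith
    have hpos : (0:ℝ) ≤ 1 - β*(0.6931471808:ℝ)/3 := by nlinarith
    have h3 : (1 - β*L/3)^3 ≤ Real.exp (-(β*L)) := by
      calc (1 - β*L/3)^3 ≤ (Real.exp (-(β*L)/3))^3 := by
            apply pow_le_pow_left₀ (by nlinarith) h1'
        _ = Real.exp (-(β*L)) := by rw [← Real.exp_nat_mul]; ring_nf
    have hmono : (1 - β*(0.6931471808:ℝ)/3)^3 ≤ (1 - β*L/3)^3 := by
      apply pow_le_pow_left₀ hpos
      nlinarith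
    have hpoly : 2 + α + α^2 ≤ 4*(1 - β*(0.6931471808:ℝ)/3)^3 := by
      have hα : α = 1 - β := by rw [hβ]; ring
      rw [hα]
      nlinarith [mul_nonneg hβ0 hβ0, mul_nonneg (mul_nonneg hβ0 hβ0) hβ0,
        mul_nonneg hβ0 (by linarith : (0:ℝ) ≤ 1/2 - β),
        mul_nonneg (mul_nonneg hβ0 hβ0) (by linarith : (0:ℝ) ≤ 1/2 - β)]
    linarith

section
variable (α T a b : ℝ)

lemma gcont {c d : ℝ} (hd : d < T) (hcd : c ≤ d) :
    ContinuousOn (fun η : ℝ => (T - η)^(-α)) (Set.Icc c d) := by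
  apply ContinuousOn.rpow_const
  · exact (continuous_const.sub continuous_id).continuousOn
  · intro x hx
    left
    have : x ≤ d := hx.2
    have : 0 < T - x := by linarith
    positivity

lemma fint {c d : ℝ} (hd : d < T) (hcd : c ≤ d) (m : ℝ) :
    IntervalIntegrable (fun η : ℝ => (η - m) * (T - η)^(-α))
      MeasureTheory.volume c d := by
  apply ContinuousOn.intervalIntegrable
  rw [Set.uIcc_of_le hcd]
  exact ((continuous_id.sub continuous_const).continuousOn).mul (gcont α T hd hcd)

lemma lin_int (m C c d : ℝ) :
    ∫ η in c..d, (η - m) * C = ((d - m)^2/2 - (c - m)^2/2) * C := by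
  have h : (fun η : ℝ => (η - m) * C) = fun η => C * η + (-(m*C)) := by ext η; ring
  rw [h, intervalIntegral.integral_add (f := fun η : ℝ => C * η)
    ((continuous_const.mul continuous_id').intervalIntegrable c d)
    intervalIntegrable_const, intervalIntegral.integral_const_mul,
    integral_id, intervalIntegral.integral_const]
  simp only [smul_eq_mul]
  ring

lemma Ibound (hα : 0 < α) (hab : a < b) (hbT : b < T) :
    ∫ η in a..b, (η - (a+b)/2) * (T - η)^(-α)
      ≤ ((b-a)^2/8) * ((T-b)^(-α) - (T-a)^(-α)) := by
  obtain ⟨m, hm⟩ : ∃ m : ℝ, m = (a+b)/2 := ⟨_, rfl⟩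
  rw [show (a+b)/2 = m from hm.symm]
  have ham : a ≤ m := by rw [hm]; linarith
  have hmb : m ≤ b := by rw [hm]; linarith
  have hmT : m < T := by linarith
  rw [← intervalIntegral.integral_add_adjacent_intervals
    (fint α T (lt_of_le_of_lt hmb hbT) ham m) (fint α T hbT hmb m)]
  have hTb : 0 < T - b := by linarith
  have hTa : 0 < T - a := by linarith
  have B1 : ∫ η in a..m, (η - m) * (T - η)^(-α)
      ≤ ∫ η in a..m, (η - m) * (T - a)^(-α) := by
    apply intervalIntegral.integral_mono_on ham
      (fint α T (lt_of_le_of_lt hmb hbT) ham m)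
      (Continuous.intervalIntegrable (by continuity) a m)
    intro η hη
    have h1 : η - m ≤ 0 := by linarith [hη.2]
    have h2 : (T - a)^(-α) ≤ (T - η)^(-α) := by
      apply Real.rpow_le_rpow_of_nonpos (by linarith [hη.2]) (by linarith [hη.1])
        (by linarith)
    exact mul_le_mul_of_nonpos_left h2 h1
  have B2 : ∫ η in m..b, (η - m) * (T - η)^(-α)
      ≤ ∫ η in m..b, (η - m) * (T - b)^(-α) := by
    apply intervalIntegral.integral_mono_on hmb
      (fint α T hbT hmb m)
      (Continuous.intervalIntegrable (by continuity) m b)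
    intro η hη
    have h1 : 0 ≤ η - m := by linarith [hη.1]
    have h2 : (T - η)^(-α) ≤ (T - b)^(-α) := by
      apply Real.rpow_le_rpow_of_nonpos hTb (by linarith [hη.2]) (by linarith)
    exact mul_le_mul_of_nonneg_left h2 h1
  rw [lin_int] at B1 B2
  subst hm
  nlinarith [B1, B2]

lemma Inonneg (hα : 0 < α) (hab : a < b) (hbT : b < T) :
    0 ≤ ∫ η in a..b, (η - (a+b)/2) * (T - η)^(-α) := by
  obtain ⟨m, hm⟩ : ∃ m : ℝ, m = (a+b)/2 := ⟨_, rfl⟩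
  rw [show (a+b)/2 = m from hm.symm]
  have ham : a ≤ m := by rw [hm]; linarith
  have hmb : m ≤ b := by rw [hm]; linarith
  have hmT : m < T := by linarith
  have hTm : 0 < T - m := by linarith
  rw [← intervalIntegral.integral_add_adjacent_intervals
    (fint α T (lt_of_le_of_lt hmb hbT) ham m) (fint α T hbT hmb m)]
  have B1 : ∫ η in a..m, (η - m) * (T - m)^(-α)
      ≤ ∫ η in a..m, (η - m) * (T - η)^(-α) := by
    apply intervalIntegral.integral_mono_on ham
      (Continuous.intervalIntegrable (by continuity) a m)
      (fint α T (lt_of_le_of_lt hmb hbT) ham m)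
    intro η hη
    have h1 : η - m ≤ 0 := by linarith [hη.2]
    have h2 : (T - η)^(-α) ≤ (T - m)^(-α) := by
      apply Real.rpow_le_rpow_of_nonpos hTm (by linarith [hη.2]) (by linarith)
    exact mul_le_mul_of_nonpos_left h2 h1
  have B2 : ∫ η in m..b, (η - m) * (T - m)^(-α)
      ≤ ∫ η in m..b, (η - m) * (T - η)^(-α) := by
    apply intervalIntegral.integral_mono_on hmb
      (Continuous.intervalIntegrable (by continuity) m b)
      (fint α T hbT hmb m)
    intro η hη
    have h1 : 0 ≤ η - m := by linarith [hη.1]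
    have h2 : (T - m)^(-α) ≤ (T - η)^(-α) := by
      apply Real.rpow_le_rpow_of_nonpos (by linarith [hη.2]) (by linarith [hη.1])
        (by linarith)
    exact mul_le_mul_of_nonneg_left h2 h1
  rw [lin_int] at B1 B2
  subst hm
  nlinarith [B1, B2]
end

open intervalIntegral in
lemma Ilast (α τ : ℝ) (hα0 : 0 < α) (hα1 : α < 1) (hτ : 0 < τ) (a : ℝ) :
    ∫ η in a..(a+τ), (η - (a + τ/2)) * ((a+τ) - η)^(-α)
      = τ^(2-α) * α / (2*(1-α)*(2-α)) := by
  have h1 : -1 < -α := by linarith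
  have h2 : -1 < 1 - α := by linarith
  have key : (∫ η in a..(a+τ), (η - (a + τ/2)) * ((a+τ) - η)^(-α))
      = ∫ u in (0:ℝ)..τ, (τ/2 - u) * u^(-α) := by
    have := integral_comp_sub_left (a := a) (b := a+τ)
      (fun u => (τ/2 - u) * u^(-α)) (a+τ)
    simp only [add_sub_cancel_left, sub_self] at this
    rw [← this]
    congr 1
    ext η
    ring_nf
  rw [key]
  have heq : ∀ u ∈ Set.uIcc (0:ℝ) τ, (τ/2 - u) * u^(-α)
      = (τ/2) * u^(-α) - u^(1-α) := by
    intro u hu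
    rw [Set.uIcc_of_le hτ.le] at hu
    rcases eq_or_lt_of_le hu.1 with h | h
    · simp [← h, Real.zero_rpow (by linarith : -α ≠ 0),
        Real.zero_rpow (by linarith : (1:ℝ)-α ≠ 0)]
    · have : u^(1-α) = u * u^(-α) := by
        rw [show (1:ℝ)-α = 1 + (-α) by ring, Real.rpow_add h, Real.rpow_one]
      rw [this]; ring
  rw [intervalIntegral.integral_congr heq]
  have hi1 : IntervalIntegrable (fun u : ℝ => (τ/2) * u^(-α)) MeasureTheory.volume 0 τ :=
    (intervalIntegral.intervalIntegrable_rpow' h1).const_mul _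
  have hi2 : IntervalIntegrable (fun u : ℝ => u^(1-α)) MeasureTheory.volume 0 τ :=
    intervalIntegral.intervalIntegrable_rpow' h2
  rw [intervalIntegral.integral_sub hi1 hi2, intervalIntegral.integral_const_mul,
    integral_rpow (Or.inl h1), integral_rpow (Or.inl h2)]
  have hz1 : (0:ℝ)^(-α+1) = 0 := Real.zero_rpow (by linarith)
  have hz2 : (0:ℝ)^(1-α+1) = 0 := Real.zero_rpow (by linarith)
  have e3 : τ * τ^(1-α) = τ^(2-α) := by
    rw [show (2:ℝ)-α = 1 + (1-α) by ring, Real.rpow_add hτ, Real.rpow_one]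
  rw [hz1, hz2, show -α+1 = 1-α by ring, show (1:ℝ)-α+1 = 2-α by ring, ← e3]
  have d1 : (1:ℝ) - α ≠ 0 := by linarith
  have d2 : (2:ℝ) - α ≠ 0 := by linarith
  field_simp
  ring


lemma final_step (α M A B : ℝ) (hα0 : 0 < α) (hα1 : α < 1) (hM : 0 ≤ M) (hA : 0 ≤ A) :
    M * (A/8 + A*α/(2*(1-α)*(2-α))) ≤ 2^α*M/4*A/((1-α)*(2-α)) := by
  have key := key_ineq α hα0.le hα1.le
  have h1 : (0:ℝ) < 1-α := by linarith
  have h2 : (0:ℝ) < 2-α := by linarith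
  have hMA : 0 ≤ M*A := mul_nonneg hM hA
  have hmul := mul_le_mul_of_nonneg_left key hMA
  have g2 : M * (A/8 + A*α/(2*(1-α)*(2-α))) = M*A*(2+α+α^2) / (8*(1-α)*(2-α)) := by
    field_simp; ring
  have g3 : 2^α*M/4*A/((1-α)*(2-α)) = M*A*(2*2^α) / (8*(1-α)*(2-α)) := by
    field_simp; ring
  rw [g2, g3]
  gcongr

theorem stmt_8 (α M τ : ℝ) (hα0 : 0 < α) (hα1 : α < 1) (hM : 0 ≤ M) (hτ : 0 < τ)
    (j : ℕ) (c : ℕ → ℝ) (hc : ∀ s ≤ j, |c s| ≤ M) :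
    |∑ s ∈ Finset.range (j + 1), c s *
        ∫ η in ((s:ℝ) * τ)..(((s:ℝ) + 1) * τ),
          (η - ((s:ℝ) + 1/2) * τ) * (((j:ℝ) + 1) * τ - η) ^ (-α)|
      ≤ (2 ^ α * M / 4) * τ ^ (2 - α) / ((1 - α) * (2 - α)) := by
  set T := ((j:ℝ)+1)*τ with hT
  set I : ℕ → ℝ := fun s => ∫ η in ((s:ℝ) * τ)..(((s:ℝ) + 1) * τ),
    (η - ((s:ℝ) + 1/2) * τ) * (T - η) ^ (-α) with hI
  -- nonnegativity for s < j
  have hab : ∀ s : ℕ, (s:ℝ)*τ < ((s:ℝ)+1)*τ := by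
    intro s; nlinarith [Nat.cast_nonneg (α := ℝ) s]
  have hbT : ∀ s : ℕ, s < j → ((s:ℝ)+1)*τ < T := by
    intro s hs
    have : (s:ℝ)+1 ≤ (j:ℝ) := by exact_mod_cast Nat.succ_le_of_lt hs
    rw [hT]; nlinarith
  have hmid : ∀ s : ℕ, ((s:ℝ)*τ + ((s:ℝ)+1)*τ)/2 = ((s:ℝ)+1/2)*τ := by
    intro s; ring
  have hIlast : I j = τ^(2-α) * α / (2*(1-α)*(2-α)) := by
    have h := Ilast α τ hα0 hα1 hτ ((j:ℝ)*τ)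
    rw [show (j:ℝ)*τ + τ = ((j:ℝ)+1)*τ by ring,
        show (j:ℝ)*τ + τ/2 = ((j:ℝ)+1/2)*τ by ring] at h
    exact h
  have hInn : ∀ s ≤ j, 0 ≤ I s := by
    intro s hs
    rcases lt_or_eq_of_le hs with hs | hs
    · have h := Inonneg α T ((s:ℝ)*τ) (((s:ℝ)+1)*τ) hα0 (hab s) (hbT s hs)
      rw [hmid s] at h
      exact h
    · rw [hs, hIlast]
      have h1 : (0:ℝ) < 1-α := by linarith
      have h2 : (0:ℝ) < 2-α := by linarith
      positivity
  have hIb : ∀ s : ℕ, s < j →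
      I s ≤ τ^2/8 * ((T - ((s:ℝ)+1)*τ)^(-α) - (T - (s:ℝ)*τ)^(-α)) := by
    intro s hs
    have h := Ibound α T ((s:ℝ)*τ) (((s:ℝ)+1)*τ) hα0 (hab s) (hbT s hs)
    rw [hmid s, show ((s:ℝ)+1)*τ - (s:ℝ)*τ = τ by ring] at h
    exact h
  -- step 1: abs of sum
  have step1 : |∑ s ∈ Finset.range (j + 1), c s * I s|
      ≤ ∑ s ∈ Finset.range (j + 1), M * I s := by
    refine (Finset.abs_sum_le_sum_abs _ _).trans (Finset.sum_le_sum fun s hs => ?_)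
    rw [Finset.mem_range, Nat.lt_succ_iff] at hs
    rw [abs_mul, abs_of_nonneg (hInn s hs)]
    exact mul_le_mul_of_nonneg_right (hc s hs) (hInn s hs)
  -- telescoping bound for first j terms
  set f : ℕ → ℝ := fun n => τ^2/8 * (T - (n:ℝ)*τ)^(-α) with hf
  have step2 : ∑ s ∈ Finset.range j, I s ≤ f j - f 0 := by
    rw [← Finset.sum_range_sub f j]
    refine Finset.sum_le_sum fun s hs => ?_
    rw [Finset.mem_range] at hs
    have h := hIb s hs
    have : f (s+1) - f s = τ^2/8 * ((T - ((s:ℝ)+1)*τ)^(-α) - (T - (s:ℝ)*τ)^(-α)) := by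
      rw [hf]; push_cast; ring
    rw [this]
    exact h
  have hfj : f j = τ^2/8 * τ^(-α) := by
    show τ^2/8 * (T - (j:ℝ)*τ)^(-α) = τ^2/8 * τ^(-α)
    rw [show T - (j:ℝ)*τ = τ by rw [hT]; ring]
  have hf0 : 0 ≤ f 0 := by
    show (0:ℝ) ≤ τ^2/8 * (T - ((0:ℕ):ℝ)*τ)^(-α)
    have hbase : (0:ℝ) ≤ T - ((0:ℕ):ℝ)*τ := by
      rw [hT]; push_cast
      nlinarith [Nat.cast_nonneg (α := ℝ) j]
    exact mul_nonneg (by positivity) (Real.rpow_nonneg hbase _)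
  have hrp : τ^2 * τ^(-α) = τ^(2-α) := by
    rw [show (2:ℝ)-α = (2:ℝ) + (-α) by ring, Real.rpow_add hτ,
      show ((2:ℝ)) = ((2:ℕ):ℝ) by norm_num, Real.rpow_natCast]
  have step3 : ∑ s ∈ Finset.range (j+1), M * I s
      ≤ M * (τ^(2-α)/8 + τ^(2-α)*α/(2*(1-α)*(2-α))) := by
    rw [← Finset.mul_sum, Finset.sum_range_succ, hIlast]
    apply mul_le_mul_of_nonneg_left _ hM
    have := step2
    rw [hfj] at this
    nlinarith [hf0, hrp]
  have fin := final_step α M (τ^(2-α)) 0 hα0 hα1 hM (Real.rpow_nonneg hτ.le _)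
  calc |∑ s ∈ Finset.range (j + 1), c s * I s| ≤ _ := step1
    _ ≤ _ := step3
    _ ≤ _ := fin
end

section
/- Discrete summation-by-parts estimate (Lemma 3 core): Let N ≥ 2, h = 1/N, a : {1,…,N} → ℝ with 0 < a_i ≤ c₂, v : {0,…,N} → [0,∞), and w : {1,…,N} → ℝ (playing the role of a_i y_{x̄,i}). Then (1/h²) ∑_{i=1}^{N−1} v_i (w_{i+1} − w_i)² h ≤ (4c₂/h²) ∑_{i=1}^{N} v_i (w_i²/a_i) h − (2/h) ∑_{i=1}^{N} ((v_i − v_{i−1})/h) w_i² h − (2/h)(v_N w_N² + v_0 w_1²). -/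
open Finset

theorem stmt_14 (N : ℕ) (hN : 2 ≤ N) (h c₂ : ℝ) (hh : h = 1 / (N:ℝ)) (hc₂ : 0 < c₂)
    (a : ℕ → ℝ) (ha : ∀ i, 1 ≤ i → i ≤ N → 0 < a i ∧ a i ≤ c₂)
    (v : ℕ → ℝ) (hv : ∀ i ≤ N, 0 ≤ v i)
    (w : ℕ → ℝ) :
    (1 / h ^ 2) * ∑ i ∈ Finset.Icc 1 (N - 1), v i * (w (i + 1) - w i) ^ 2 * h
      ≤ (4 * c₂ / h ^ 2) * ∑ i ∈ Finset.Icc 1 N, v i * ((w i) ^ 2 / a i) * h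
        - (2 / h) * ∑ i ∈ Finset.Icc 1 N, ((v i - v (i - 1)) / h) * (w i) ^ 2 * h
        - (2 / h) * (v N * (w N) ^ 2 + v 0 * (w 1) ^ 2) := by
  obtain ⟨m, rfl⟩ : ∃ m, N = m + 2 := ⟨N - 2, by omega⟩
  have hpos : 0 < h := by
    rw [hh]; positivity
  -- core sums over range
  set A := ∑ i ∈ Finset.range (m + 1), v (i + 1) * (w (i + 2) - w (i + 1)) ^ 2 with hA
  set B := ∑ i ∈ Finset.range (m + 2), v (i + 1) * (w (i + 1) ^ 2 / a (i + 1)) with hB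
  set C := ∑ i ∈ Finset.range (m + 2), (v (i + 1) - v i) * w (i + 1) ^ 2 with hC
  have hva : ∀ i ∈ Finset.range (m + 2), v (i + 1) * w (i + 1) ^ 2 ≤ c₂ * (v (i + 1) * (w (i + 1) ^ 2 / a (i + 1))) := by
    intro i hi
    simp only [Finset.mem_range] at hi
    obtain ⟨ha1, ha2⟩ := ha (i + 1) (by omega) (by omega)
    have hvi : 0 ≤ v (i + 1) := hv (i + 1) (by omega)
    have h1 : w (i + 1) ^ 2 / c₂ ≤ w (i + 1) ^ 2 / a (i + 1) :=
      div_le_div_of_nonneg_left (sq_nonneg _) ha1 ha2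
    have h2 : c₂ * (w (i + 1) ^ 2 / c₂) ≤ c₂ * (w (i + 1) ^ 2 / a (i + 1)) :=
      mul_le_mul_of_nonneg_left h1 hc₂.le
    rw [mul_div_cancel₀ _ hc₂.ne'] at h2
    calc v (i + 1) * w (i + 1) ^ 2 ≤ v (i + 1) * (c₂ * (w (i + 1) ^ 2 / a (i + 1))) :=
          mul_le_mul_of_nonneg_left h2 hvi
      _ = c₂ * (v (i + 1) * (w (i + 1) ^ 2 / a (i + 1))) := by ring
  have hBge : ∑ i ∈ Finset.range (m + 2), v (i + 1) * w (i + 1) ^ 2 ≤ c₂ * B := by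
    rw [hB, Finset.mul_sum]
    exact Finset.sum_le_sum hva
  have hCsplit : C = ∑ i ∈ Finset.range (m + 2), v (i + 1) * w (i + 1) ^ 2
      - (∑ i ∈ Finset.range (m + 1), v (i + 1) * w (i + 2) ^ 2 + v 0 * w 1 ^ 2) := by
    rw [hC]
    have : ∑ i ∈ Finset.range (m + 2), v i * w (i + 1) ^ 2
        = ∑ i ∈ Finset.range (m + 1), v (i + 1) * w (i + 1 + 1) ^ 2 + v 0 * w (0 + 1) ^ 2 :=
      Finset.sum_range_succ' (fun i => v i * w (i + 1) ^ 2) (m + 1)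
    simp only [sub_mul, Finset.sum_sub_distrib]
    rw [this]
  have hsplit2 : ∑ i ∈ Finset.range (m + 2), v (i + 1) * w (i + 1) ^ 2
      = ∑ i ∈ Finset.range (m + 1), v (i + 1) * w (i + 1) ^ 2 + v (m + 2) * w (m + 2) ^ 2 :=
    Finset.sum_range_succ _ (m + 1)
  have hAle : A ≤ 2 * ∑ i ∈ Finset.range (m + 1), v (i + 1) * w (i + 2) ^ 2
      + 2 * ∑ i ∈ Finset.range (m + 1), v (i + 1) * w (i + 1) ^ 2 := by
    rw [hA, Finset.mul_sum, Finset.mul_sum, ← Finset.sum_add_distrib]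
    apply Finset.sum_le_sum
    intro i hi
    simp only [Finset.mem_range] at hi
    have hvi : 0 ≤ v (i + 1) := hv (i + 1) (by omega)
    nlinarith [sq_nonneg (w (i + 2) + w (i + 1)), mul_le_mul_of_nonneg_left (sq_nonneg (w (i + 2) + w (i + 1))) hvi]
  have core : A ≤ 4 * c₂ * B - 2 * C - 2 * (v (m + 2) * w (m + 2) ^ 2 + v 0 * w 1 ^ 2) := by
    have h4 : 4 * (∑ i ∈ Finset.range (m + 2), v (i + 1) * w (i + 1) ^ 2) ≤ 4 * c₂ * B := by
      linarith
    linarith [hAle, hCsplit, hsplit2]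
  -- convert Icc sums to range sums
  have e1 : ∑ i ∈ Finset.Icc 1 (m + 2 - 1), v i * (w (i + 1) - w i) ^ 2 * h = A * h := by
    rw [hA, Finset.sum_mul]
    rw [show m + 2 - 1 = m + 1 from rfl, ← Finset.Ico_add_one_right_eq_Icc, Finset.sum_Ico_eq_sum_range]
    apply Finset.sum_congr (by norm_num)
    intro i _
    have : 1 + i = i + 1 := by omega
    rw [this]
  have e2 : ∑ i ∈ Finset.Icc 1 (m + 2), v i * (w i ^ 2 / a i) * h = B * h := by
    rw [hB, Finset.sum_mul, ← Finset.Ico_add_one_right_eq_Icc, Finset.sum_Ico_eq_sum_range]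
    apply Finset.sum_congr (by norm_num)
    intro i _
    have : 1 + i = i + 1 := by omega
    rw [this]
  have e3 : ∑ i ∈ Finset.Icc 1 (m + 2), (v i - v (i - 1)) / h * w i ^ 2 * h = C := by
    rw [hC, ← Finset.Ico_add_one_right_eq_Icc, Finset.sum_Ico_eq_sum_range]
    apply Finset.sum_congr (by norm_num)
    intro i _
    have h1 : 1 + i = i + 1 := by omega
    have h2 : i + 1 - 1 = i := by omega
    rw [h1, h2]
    field_simp
  rw [e1, e2, e3]
  have key : A / h ≤ (4 * c₂ * B - 2 * C - 2 * (v (m + 2) * w (m + 2) ^ 2 + v 0 * w 1 ^ 2)) / h :=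
    (div_le_div_iff_of_pos_right hpos).mpr core
  have lhs_eq : 1 / h ^ 2 * (A * h) = A / h := by
    field_simp
  have rhs_eq : 4 * c₂ / h ^ 2 * (B * h) - 2 / h * C - 2 / h * (v (m + 2) * w (m + 2) ^ 2 + v 0 * w 1 ^ 2)
      = (4 * c₂ * B - 2 * C - 2 * (v (m + 2) * w (m + 2) ^ 2 + v 0 * w 1 ^ 2)) / h := by
    field_simp
  rw [lhs_eq]
  push_cast
  rw [rhs_eq]
  exact key
end
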